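/- Define the root partition P_R = {C^r_1,…,C^r_k} by letting C^r_i be the connected component containing t_i in G − (C^r_1 ∪ ⋯ ∪ C^r_{i−1} ∪ {t_{i+1},…,t_k}). Then the edge set R of edges crossing between distinct blocks of P_R is a minimal edge multiway cut of (G,T); in particular P_R is a partition of V into k connected blocks with t_i ∈ C^r_i. -/

import Mathlib

open SimpleGraph Set

variable {V : Type*}

/-- `M` is an edge multiway cut of `(G, T)`: a set of edges of `G` whose removal
disconnects every pair of distinct terminals. -/
def IsEdgeMultiwayCut (G : SimpleGraph V) (T : Set V) (M : Set (Sym2 V)) : Prop :=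
  M ⊆ G.edgeSet ∧ ∀ s ∈ T, ∀ u ∈ T, s ≠ u → ¬ (G.deleteEdges M).Reachable s u

/-- `M` is a minimal edge multiway cut of `(G, T)`. -/
def IsMinEdgeMultiwayCut (G : SimpleGraph V) (T : Set V) (M : Set (Sym2 V)) : Prop :=
  IsEdgeMultiwayCut G T M ∧ ∀ M' ⊂ M, ¬ IsEdgeMultiwayCut G T M'

/-- `C` is (the vertex set of) a connected component of the graph `H`. -/
def IsComp (H : SimpleGraph V) (C : Set V) : Prop :=
  ∃ c : H.ConnectedComponent, C = c.supp

/-- `C` is (the vertex set of) a connected component of `G - M` (vertex deletion). -/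
def IsCompOf (G : SimpleGraph V) (M : Set V) (C : Set V) : Prop :=
  ∃ c : (G.induce (Mᶜ : Set V)).ConnectedComponent, C = Subtype.val '' c.supp

/-- `Cr` is the root family: `Cr i` is the connected component containing `t i` of
`G − (Cr 0 ∪ ⋯ ∪ Cr (i-1) ∪ {t (i+1), …, t (k-1)})`. -/
def IsRootFamily {k : ℕ} (G : SimpleGraph V) (t : Fin k → V) (Cr : Fin k → Set V) : Prop :=
  ∀ i, IsCompOf G ((⋃ j < i, Cr j) ∪ (t '' {j | i < j})) (Cr i) ∧ t i ∈ Cr i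

/-- The set of edges of `G` crossing between distinct blocks of the family `C`. -/
def crossEdges {k : ℕ} (G : SimpleGraph V) (C : Fin k → Set V) : Set (Sym2 V) :=
  {e | ∃ a b : V, G.Adj a b ∧ e = s(a, b) ∧ ∀ i, ¬ (a ∈ C i ∧ b ∈ C i)}


lemma supp_closed_adj {W : Type*} {G' : SimpleGraph W} {c : G'.ConnectedComponent} {x y : W}
    (hx : x ∈ c.supp) (h : G'.Adj x y) : y ∈ c.supp := by
  rw [ConnectedComponent.mem_supp_iff] at *
  exact (ConnectedComponent.connectedComponentMk_eq_of_adj h.symm).trans hx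

lemma reach_in_supp {s : Set V} (G : SimpleGraph V) (c : (G.induce s).ConnectedComponent) :
    ∀ {x y : s} (_ : (G.induce s).Walk x y) (hx : x ∈ c.supp) (hy : y ∈ c.supp),
    (G.induce (Subtype.val '' c.supp)).Reachable ⟨x.1, ⟨x, hx, rfl⟩⟩ ⟨y.1, ⟨y, hy, rfl⟩⟩ := by
  intro x y p
  induction p with
  | nil => intro hx hy; exact Reachable.refl _
  | @cons x w y h q ih =>
    intro hx hy
    have hw : w ∈ c.supp := supp_closed_adj hx h
    have hadj : (G.induce (Subtype.val '' c.supp)).Adj ⟨x.1, ⟨x, hx, rfl⟩⟩ ⟨w.1, ⟨w, hw, rfl⟩⟩ := h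
    exact hadj.reachable.trans (ih hw hy)

lemma comp_supp_induce_connected {s : Set V} (G : SimpleGraph V)
    (c : (G.induce s).ConnectedComponent) :
    (G.induce (Subtype.val '' c.supp)).Connected := by
  obtain ⟨v, hv⟩ := Quot.exists_rep c
  have hv' : v ∈ c.supp := hv
  have : Nonempty (Subtype.val '' c.supp : Set V) := ⟨⟨v.1, v, hv', rfl⟩⟩
  constructor
  rintro ⟨a, x, hx, hxa⟩ ⟨b, y, hy, hyb⟩
  have hr : (G.induce s).Reachable x y := by
    rw [ConnectedComponent.mem_supp_iff] at hx hy
    exact ConnectedComponent.exact (hx.trans hy.symm)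
  obtain ⟨p⟩ := hr
  have := reach_in_supp G c p hx hy
  convert this using 2 <;> [exact Subtype.ext hxa.symm; exact Subtype.ext hyb.symm]

/-- The root family `Cr` is a partition of `V` into `k` connected blocks
with `t i ∈ Cr i`, and the set `R` of edges crossing between distinct blocks of `Cr` is a
minimal edge multiway cut of `(G, T)`. -/
theorem root_is_minimal_edge_multiway_cut (G : SimpleGraph V) (hconn : G.Connected)
    (k : ℕ) (hk : 0 < k) (t : Fin k → V) (ht : Function.Injective t)
    (Cr : Fin k → Set V) (hCr : IsRootFamily G t Cr) :
    IsMinEdgeMultiwayCut G (Set.range t) (crossEdges G Cr) ∧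
    (∀ v : V, ∃! i : Fin k, v ∈ Cr i) ∧
    (∀ i, t i ∈ Cr i) ∧
    (∀ i, (G.induce (Cr i)).Connected) := by
  classical
  set R := crossEdges G Cr with hR
  set M : Fin k → Set V := fun i => (⋃ j < i, Cr j) ∪ (t '' {j | i < j}) with hM
  have hcomp : ∀ i, ∃ c : (G.induce ((M i)ᶜ)).ConnectedComponent,
      Cr i = Subtype.val '' c.supp := fun i => (hCr i).1
  have hti : ∀ i, t i ∈ Cr i := fun i => (hCr i).2
  have hsub : ∀ i, Cr i ⊆ (M i)ᶜ := by
    intro i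
    obtain ⟨c, hc⟩ := hcomp i
    rw [hc]
    rintro _ ⟨x, hx, rfl⟩
    exact x.2
  have hconnCr : ∀ i, (G.induce (Cr i)).Connected := by
    intro i
    obtain ⟨c, hc⟩ := hcomp i
    rw [hc]
    exact comp_supp_induce_connected G c
  have hmax : ∀ i u v, u ∈ Cr i → G.Adj u v → v ∉ M i → v ∈ Cr i := by
    intro i u v hu hadj hv
    obtain ⟨c, hc⟩ := hcomp i
    rw [hc] at hu ⊢
    obtain ⟨u', hu', rfl⟩ := hu
    have hadj' : (G.induce ((M i)ᶜ)).Adj u' ⟨v, hv⟩ := hadj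
    exact ⟨⟨v, hv⟩, supp_closed_adj hu' hadj', rfl⟩
  have hdisj : ∀ i j, i ≠ j → ∀ v, v ∈ Cr i → v ∉ Cr j := by
    have key : ∀ i j : Fin k, i < j → ∀ v, v ∈ Cr i → v ∉ Cr j := by
      intro i j hij v hvi hvj
      exact hsub j hvj (Or.inl (Set.mem_biUnion hij hvi))
    intro i j hij v hvi hvj
    rcases lt_or_gt_of_ne hij with h | h
    · exact key i j h v hvi hvj
    · exact key j i h v hvj hvi
  have hcov : ∀ v, ∃ i, v ∈ Cr i := by
    intro v
    have hreach : G.Reachable (t ⟨0, hk⟩) v := hconn.preconnected _ _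
    rw [reachable_iff_reflTransGen] at hreach
    induction hreach with
    | refl => exact ⟨⟨0, hk⟩, hti _⟩
    | @tail u w hpre hadj ih =>
      obtain ⟨i, hi⟩ := ih
      by_cases hw : w ∈ M i
      · rcases hw with hw | hw
        · simp only [Set.mem_iUnion] at hw
          obtain ⟨j, _, hj⟩ := hw
          exact ⟨j, hj⟩
        · obtain ⟨j, _, rfl⟩ := hw
          exact ⟨j, hti j⟩
      · exact ⟨i, hmax i u w hi hadj hw⟩
  have huniq : ∀ v, ∃! i, v ∈ Cr i := by
    intro v
    obtain ⟨i, hi⟩ := hcov v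
    refine ⟨i, hi, fun j hj => ?_⟩
    by_contra hne
    exact hdisj j i hne v hj hi
  have hnotR : ∀ i a b, a ∈ Cr i → b ∈ Cr i → s(a, b) ∉ R := by
    intro i a b ha hb hmem
    obtain ⟨a', b', _, heq, hcross⟩ := hmem
    rcases Sym2.eq_iff.mp heq with ⟨rfl, rfl⟩ | ⟨rfl, rfl⟩
    · exact hcross i ⟨ha, hb⟩
    · exact hcross i ⟨hb, ha⟩
  have hblock : ∀ i a b, a ∈ Cr i → (G.deleteEdges R).Reachable a b → b ∈ Cr i := by
    intro i a b ha hr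
    rw [reachable_iff_reflTransGen] at hr
    induction hr with
    | refl => exact ha
    | @tail u w hpre hadj ih =>
      rw [deleteEdges_adj] at hadj
      obtain ⟨hadj', hns⟩ := hadj
      obtain ⟨j, hj⟩ := hcov w
      by_cases hij : j = i
      · exact hij ▸ hj
      · exfalso
        refine hns ⟨u, w, hadj', rfl, fun m hm => ?_⟩
        obtain ⟨hum, hwm⟩ := hm
        have hmi : m = i := by
          by_contra hne; exact hdisj m i hne u hum ih
        have hmj : m = j := by
          by_contra hne; exact hdisj m j hne w hwm hj
        exact hij (hmj ▸ hmi)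
  have hreachR : ∀ i a b, a ∈ Cr i → b ∈ Cr i → (G.deleteEdges R).Reachable a b := by
    intro i a b ha hb
    have hle : G.induce (Cr i) ≤ (G.deleteEdges R).induce (Cr i) := by
      intro x y hxy
      show (G.deleteEdges R).Adj x.1 y.1
      exact deleteEdges_adj.mpr ⟨hxy, hnotR i x.1 y.1 x.2 y.2⟩
    have hconn' := (hconnCr i).mono hle
    have hre := hconn'.preconnected ⟨a, ha⟩ ⟨b, hb⟩
    exact hre.map (Embedding.induce (Cr i)).toHom
  refine ⟨⟨⟨?_, ?_⟩, ?_⟩, huniq, hti, hconnCr⟩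
  · rintro e ⟨a, b, hadj, rfl, -⟩
    exact hadj
  · rintro s ⟨i, rfl⟩ u ⟨j, rfl⟩ hne hreach
    have hij : i ≠ j := fun h => hne (congrArg t h)
    have hj' : t j ∈ Cr i := hblock i _ _ (hti i) hreach
    exact hdisj i j hij (t j) hj' (hti j)
  · intro M' hM' hcut
    obtain ⟨e, heR, heM'⟩ := Set.exists_of_ssubset hM'
    obtain ⟨a, b, hadj, rfl, hcross⟩ := heR
    obtain ⟨i, hai⟩ := hcov a
    obtain ⟨j, hbj⟩ := hcov b
    have hij : i ≠ j := fun h => hcross i ⟨hai, h ▸ hbj⟩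
    have hle : G.deleteEdges R ≤ G.deleteEdges M' := deleteEdges_anti hM'.subset
    have r1 : (G.deleteEdges M').Reachable (t i) a :=
      (hreachR i (t i) a (hti i) hai).mono hle
    have r2 : (G.deleteEdges M').Reachable b (t j) :=
      (hreachR j b (t j) hbj (hti j)).mono hle
    have rab : (G.deleteEdges M').Reachable a b :=
      (deleteEdges_adj.mpr ⟨hadj, heM'⟩).reachable
    exact hcut.2 (t i) ⟨i, rfl⟩ (t j) ⟨j, rfl⟩ (fun h => hij (ht h))
      (r1.trans (rab.trans r2))
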